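/- Let P, Q ∈ B be points of infinite order. If for almost every v ∈ V there exist coprime integers x, y and a torsion point T ∈ B_tors (all possibly depending on v) such that x²P + y²Q = T mod v, then P and Q are linearly dependent over ℤ; that is, there exist nonzero integers a, b with aP + bQ = 0. -/

import Mathlib

/-- If the rank-2 form `x²P + y²Q` represents a torsion point modulo almost
every `v`, then `P` and `Q` are linearly dependent over `ℤ`. -/
theorem stmt_1
    {V : Type*} [Infinite V]
    {B : Type*} [AddCommGroup B]
    (Bv : V → Type*) [∀ v, AddCommGroup (Bv v)] [∀ v, Finite (Bv v)]
    (r : ∀ v : V, B →+ Bv v)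
    (htors : {T : B | IsOfFinAddOrder T}.Finite)
    (h1 : ∀ l : ℕ, l.Prime → ∀ (m : ℕ) (Pts : Fin m → B), LinearIndependent ℤ Pts →
      ∀ k : Fin m → ℕ,
        {v : V | ∀ i : Fin m,
          l ^ (k i) ∣ addOrderOf (r v (Pts i)) ∧
          ¬ l ^ (k i + 1) ∣ addOrderOf (r v (Pts i))}.Infinite)
    (h2 : {v : V | ¬ Set.InjOn (r v) {T : B | IsOfFinAddOrder T}}.Finite)
    (P Q : B) (hP : ¬ IsOfFinAddOrder P) (hQ : ¬ IsOfFinAddOrder Q)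
    (h : {v : V | ¬ ∃ (x y : ℤ) (T : B), IsCoprime x y ∧ IsOfFinAddOrder T ∧
        r v (x ^ 2 • P + y ^ 2 • Q) = r v T}.Finite) :
    ∃ a b : ℤ, a ≠ 0 ∧ b ≠ 0 ∧ a • P + b • Q = 0 := by
  by_contra hdep
  push_neg at hdep
  -- `N` kills all torsion points
  set N : ℕ := htors.toFinset.lcm addOrderOf with hNdef
  have hN0 : (N : ℤ) ≠ 0 := by
    have : N ≠ 0 := by
      intro h0
      rw [hNdef] at h0
      rcases Finset.lcm_eq_zero_iff.mp h0 with ⟨T, hT, hT0⟩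
      rw [Set.Finite.mem_toFinset] at hT
      exact (addOrderOf_eq_zero_iff.mp hT0) hT
    exact_mod_cast this
  have hNT : ∀ T : B, IsOfFinAddOrder T → (N : ℤ) • T = 0 := by
    intro T hT
    have hd : addOrderOf T ∣ N := Finset.dvd_lcm (htors.mem_toFinset.mpr hT)
    have := addOrderOf_dvd_iff_nsmul_eq_zero.mp hd
    rw [natCast_zsmul]
    exact this
  -- `N • P` and `N • Q` are linearly independent
  have hind : LinearIndependent ℤ ![(N : ℤ) • P, (N : ℤ) • Q] := by
    rw [LinearIndependent.pair_iff]
    intro s t hst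
    rw [smul_smul, smul_smul] at hst
    rcases eq_or_ne s 0 with rfl | hs
    · rcases eq_or_ne t 0 with rfl | ht
      · exact ⟨rfl, rfl⟩
      · exfalso
        apply hQ
        rw [zero_mul, zero_smul, zero_add] at hst
        exact isOfFinAddOrder_iff_zsmul_eq_zero.mpr ⟨t * N, mul_ne_zero ht hN0, hst⟩
    · rcases eq_or_ne t 0 with rfl | ht
      · exfalso
        apply hP
        rw [zero_mul, zero_smul, add_zero] at hst
        exact isOfFinAddOrder_iff_zsmul_eq_zero.mpr ⟨s * N, mul_ne_zero hs hN0, hst⟩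
      · exact absurd hst (hdep _ _ (mul_ne_zero hs hN0) (mul_ne_zero ht hN0))
  -- pick a good place `v`
  have hinf := (h1 2 Nat.prime_two 2 ![(N : ℤ) • P, (N : ℤ) • Q] hind ![2, 1]).diff h
  obtain ⟨v, hv1, hv2⟩ := hinf.nonempty
  simp only [Set.mem_setOf_eq] at hv1
  simp only [Set.mem_setOf_eq, not_not] at hv2
  obtain ⟨x, y, T, hxy, hT, hrel⟩ := hv2
  have h0' := hv1 0
  have h1' := hv1 1
  simp only [Matrix.cons_val_zero, Matrix.cons_val_one, Matrix.head_cons] at h0' h1'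
  set R := r v ((N : ℤ) • P) with hR
  set S := r v ((N : ℤ) • Q) with hS
  set A := addOrderOf R with hA
  set Bo := addOrderOf S with hBo
  obtain ⟨hA4, hA8⟩ := h0'
  obtain ⟨hB2, hB4⟩ := h1'
  norm_num at hA4 hA8 hB2 hB4
  -- the key relation mod v
  have key : x ^ 2 • R + y ^ 2 • S = 0 := by
    have h0 : r v ((N : ℤ) • (x ^ 2 • P + y ^ 2 • Q)) = 0 := by
      rw [map_zsmul, hrel, ← map_zsmul, hNT T hT, map_zero]
    calc x ^ 2 • R + y ^ 2 • S
        = r v (x ^ 2 • ((N : ℤ) • P) + y ^ 2 • ((N : ℤ) • Q)) := by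
          simp only [hR, hS, map_add, map_zsmul]
      _ = r v ((N : ℤ) • (x ^ 2 • P + y ^ 2 • Q)) := by
          congr 1
          module
      _ = 0 := h0
  have hx2 : x ^ 2 • R = -(y ^ 2 • S) := eq_neg_of_add_eq_zero_left key
  have hBoz : (Bo : ℤ) • S = 0 := by
    rw [natCast_zsmul]
    exact addOrderOf_nsmul_eq_zero S
  have hAz : (A : ℤ) • R = 0 := by
    rw [natCast_zsmul]
    exact addOrderOf_nsmul_eq_zero R
  -- Step 1 : 2 ∣ x
  have hd1 : (A : ℤ) ∣ (Bo : ℤ) * x ^ 2 := by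
    rw [addOrderOf_dvd_iff_zsmul_eq_zero]
    rw [mul_smul, hx2, smul_neg, smul_comm, hBoz, smul_zero, neg_zero]
  obtain ⟨c, hc⟩ := hB2
  have hcodd : ¬ (2 : ℕ) ∣ c := by
    intro hcc
    exact hB4 (by omega)
  have h4d : (4 : ℤ) ∣ (Bo : ℤ) * x ^ 2 := dvd_trans (by exact_mod_cast hA4) hd1
  have h2cx : (2 : ℤ) ∣ (c : ℤ) * x ^ 2 := by
    have h4' : (2 : ℤ) * 2 ∣ 2 * ((c : ℤ) * x ^ 2) := by
      have : ((Bo : ℤ)) * x ^ 2 = 2 * ((c : ℤ) * x ^ 2) := by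
        push_cast [hc]; ring
      rw [← this]
      exact_mod_cast h4d
    exact (mul_dvd_mul_iff_left (two_ne_zero)).mp h4'
  have hxdvd : (2 : ℤ) ∣ x := by
    rcases (Int.prime_two.dvd_mul).mp h2cx with hcase | hcase
    · exact absurd (by exact_mod_cast hcase) hcodd
    · exact Int.prime_two.dvd_of_dvd_pow hcase
  -- Step 2 : 2 ∣ y
  obtain ⟨a, ha⟩ := hA4
  have haodd : ¬ (2 : ℕ) ∣ a := by
    intro hcc
    exact hA8 (by omega)
  obtain ⟨e, he⟩ := hxdvd
  have hax : ((a : ℤ) * x ^ 2) • R = 0 := by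
    have : (a : ℤ) * x ^ 2 = e ^ 2 * (A : ℤ) := by
      rw [he]; push_cast [ha]; ring
    rw [this, mul_smul, hAz, smul_zero]
  have hy2 : y ^ 2 • S = -(x ^ 2 • R) := eq_neg_of_add_eq_zero_right key
  have hd2 : (Bo : ℤ) ∣ (a : ℤ) * y ^ 2 := by
    rw [addOrderOf_dvd_iff_zsmul_eq_zero, mul_smul, hy2, smul_neg, ← mul_smul, hax, neg_zero]
  have h2ay : (2 : ℤ) ∣ (a : ℤ) * y ^ 2 := by
    refine dvd_trans ?_ hd2
    exact_mod_cast (⟨c, hc⟩ : (2:ℕ) ∣ Bo)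
  have hydvd : (2 : ℤ) ∣ y := by
    rcases (Int.prime_two.dvd_mul).mp h2ay with hcase | hcase
    · exact absurd (by exact_mod_cast hcase) haodd
    · exact Int.prime_two.dvd_of_dvd_pow hcase
  -- contradiction with coprimality
  obtain ⟨u, w, huw⟩ := hxy
  have h21 : (2 : ℤ) ∣ 1 := by
    rw [← huw]
    exact dvd_add (Dvd.dvd.mul_left ⟨e, he⟩ u) (Dvd.dvd.mul_left hydvd w)
  norm_num at h21
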